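/- arXiv:1905.04356 — 6 statements merged into one kernel-verified Lean document; each statement's English description precedes it below -/
import Mathlib

section
/- Let K be a field, let F be in K[x]^{m×n} of degree at most d, let s be in ℕ^m, and let δ be a positive integer such that every s-reduced left kernel basis of F has all its rows of s-degree strictly less than δ. Let M in K[x] have degree at least δ + d, and let P in K[x]^{m×m} be an s-reduced matrix whose rows form a K[x]-basis of A_M(F). Then the submatrix of P formed by its rows of s-degree strictly less than δ is an s-reduced left kernel basis for F. -/
open Polynomial Matrix

noncomputable section

/-- The `s`-degree of a row vector `p ∈ K[x]^{1×m}`: `max_i (deg p_i + s_i)`,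
with the convention `deg 0 = ⊥`. -/
def rdeg {K : Type*} [Field K] {m : ℕ} (s : Fin m → ℤ) (p : Fin m → K[X]) : WithBot ℤ :=
  Finset.univ.sup fun i => WithBot.map (fun d : ℕ => (d : ℤ) + s i) (p i).degree

/-- The `s`-leading row of a row vector `p`: its `j`-th entry is the coefficient of
`p_j` of degree `rdeg_s(p) - s_j` (zero if this degree is negative). -/
def leadingRow {K : Type*} [Field K] {m : ℕ} (s : Fin m → ℤ) (p : Fin m → K[X]) :
    Fin m → K := fun j =>
  if 0 ≤ (rdeg s p).unbotD 0 - s j then (p j).coeff ((rdeg s p).unbotD 0 - s j).toNat else 0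

/-- A family of row vectors is `s`-reduced if the rows of its `s`-leading matrix are
linearly independent over `K` (full row rank); for a square matrix this is
equivalent to the `s`-leading matrix being invertible over `K`. -/
def IsRowReduced {K : Type*} [Field K] {m : ℕ} {ι : Type*} (s : Fin m → ℤ)
    (rows : ι → Fin m → K[X]) : Prop :=
  LinearIndependent K fun i => leadingRow s (rows i)

/-- The module `A_M(F)` of row vectors `p` with `p F = 0 (mod M)`. -/
def approxModule {K : Type*} [Field K] {m n : ℕ} (M : K[X]) (F : Matrix (Fin m) (Fin n) K[X]) :
    Submodule K[X] (Fin m → K[X]) where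
  carrier := {p | ∀ j, M ∣ (p ᵥ* F) j}
  add_mem' := by
    intro p q hp hq j
    rw [Matrix.add_vecMul, Pi.add_apply]
    exact dvd_add (hp j) (hq j)
  zero_mem' := by
    intro j
    simp [Matrix.zero_vecMul]
  smul_mem' := by
    intro c p hp j
    rw [Matrix.smul_vecMul, Pi.smul_apply, smul_eq_mul]
    exact Dvd.dvd.mul_left (hp j) c

/-- The left kernel `{p ∈ K[x]^{1×m} : p F = 0}` of `F`, as a `K[x]`-module. -/
def kernelModule {K : Type*} [Field K] {m n : ℕ} (F : Matrix (Fin m) (Fin n) K[X]) :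
    Submodule K[X] (Fin m → K[X]) :=
  LinearMap.ker F.vecMulLinear

/-- A family of row vectors forms a basis of a submodule `N` if it is linearly
independent over `K[x]` and spans `N`. -/
def IsBasisOf {K : Type*} [Field K] {m : ℕ} {ι : Type*}
    (rows : ι → Fin m → K[X]) (N : Submodule K[X] (Fin m → K[X])) : Prop :=
  LinearIndependent K[X] rows ∧ Submodule.span K[X] (Set.range rows) = N

namespace Aux
variable {K : Type*} [Field K] {m : ℕ} (s : Fin m → ℤ)

/-- The coefficient-extraction row at shifted degree `D`. -/
def coeffRow (D : ℤ) (p : Fin m → K[X]) : Fin m → K := fun j =>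
  if 0 ≤ D - s j then (p j).coeff (D - s j).toNat else 0

lemma leadingRow_eq (p : Fin m → K[X]) :
    leadingRow s p = coeffRow s ((rdeg s p).unbotD 0) p := rfl

variable {s}

lemma rdeg_eq_bot_iff {p : Fin m → K[X]} : rdeg s p = ⊥ ↔ p = 0 := by
  simp only [rdeg, Finset.sup_eq_bot_iff, WithBot.map_eq_bot_iff, degree_eq_bot,
    Finset.mem_univ, forall_true_left]
  exact ⟨fun h => funext h, fun h i => congrFun h i⟩

lemma rdeg_ne_bot {p : Fin m → K[X]} (hp : p ≠ 0) : rdeg s p ≠ ⊥ :=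
  fun h => hp (rdeg_eq_bot_iff.mp h)

lemma rdeg_eq_coe {p : Fin m → K[X]} (hp : p ≠ 0) :
    rdeg s p = ((rdeg s p).unbotD 0 : ℤ) := by
  lift rdeg s p to ℤ using rdeg_ne_bot hp with t ht
  simp

lemma le_rdeg (p : Fin m → K[X]) (i : Fin m) :
    WithBot.map (fun d : ℕ => (d : ℤ) + s i) (p i).degree ≤ rdeg s p :=
  Finset.le_sup (f := fun i => WithBot.map (fun d : ℕ => (d:ℤ) + s i) (p i).degree) (Finset.mem_univ i)

lemma coe_le_rdeg {p : Fin m → K[X]} {i : Fin m} (hi : p i ≠ 0) :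
    (((p i).natDegree : ℤ) + s i : ℤ) ≤ rdeg s p := by
  have := le_rdeg (s := s) p i
  rwa [degree_eq_natDegree hi] at this

lemma coeff_eq_zero_of_rdeg_lt {p : Fin m → K[X]} {j : Fin m} {e : ℕ}
    (h : rdeg s p < (((e : ℤ) + s j : ℤ) : WithBot ℤ)) : (p j).coeff e = 0 := by
  by_contra hc
  have hj : p j ≠ 0 := fun h0 => hc (by simp [h0])
  have h1 : (e : ℕ) ≤ (p j).natDegree := le_natDegree_of_ne_zero hc
  have h2 : ((e : ℤ) + s j : ℤ) ≤ (((p j).natDegree : ℤ) + s j) := by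
    omega
  exact absurd (lt_of_le_of_lt (coe_le_rdeg hj) h) (by exact_mod_cast not_lt.mpr h2)

lemma rdeg_le_iff {p : Fin m → K[X]} {D : ℤ} :
    rdeg s p ≤ (D : WithBot ℤ) ↔ ∀ (j : Fin m) (e : ℕ), D < (e : ℤ) + s j → (p j).coeff e = 0 := by
  constructor
  · intro h j e he
    exact coeff_eq_zero_of_rdeg_lt (lt_of_le_of_lt h (by exact_mod_cast he))
  · intro h
    refine Finset.sup_le fun i _ => ?_
    rcases eq_or_ne (p i) 0 with h0 | h0
    · rw [h0]; simp
    · rw [degree_eq_natDegree h0]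
      simp only [Nat.cast_withBot, WithBot.map_coe, WithBot.coe_le_coe]
      by_contra hlt
      push_neg at hlt
      exact (leadingCoeff_ne_zero.mpr h0) (h i _ hlt)

lemma coeffRow_add (D : ℤ) (p q : Fin m → K[X]) :
    coeffRow s D (p + q) = coeffRow s D p + coeffRow s D q := by
  funext j
  simp only [coeffRow, Pi.add_apply, coeff_add]
  split <;> simp

lemma coeffRow_sum {ι : Type*} (t : Finset ι) (D : ℤ) (f : ι → Fin m → K[X]) :
    coeffRow s D (∑ i ∈ t, f i) = ∑ i ∈ t, coeffRow s D (f i) := by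
  classical
  induction t using Finset.induction_on with
  | empty => funext j; simp [coeffRow]
  | insert _ _ hni ih =>
      rw [Finset.sum_insert hni, Finset.sum_insert hni, coeffRow_add, ih]

lemma coeffRow_eq_zero_of_rdeg_lt {D : ℤ} {p : Fin m → K[X]}
    (h : rdeg s p < (D : WithBot ℤ)) : coeffRow s D p = 0 := by
  funext j
  simp only [coeffRow, Pi.zero_apply]
  split
  · rename_i hj
    refine coeff_eq_zero_of_rdeg_lt (lt_of_lt_of_le h ?_)
    rw [WithBot.coe_le_coe]
    omega
  · rfl

lemma rdeg_le_of_coeffRow_ne {D : ℤ} {p : Fin m → K[X]}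
    (h : coeffRow s D p ≠ 0) : (D : WithBot ℤ) ≤ rdeg s p :=
  not_lt.mp fun hlt => h (coeffRow_eq_zero_of_rdeg_lt hlt)

lemma rdeg_smul {c : K[X]} (hc : c ≠ 0) (p : Fin m → K[X]) :
    rdeg s (c • p) = ((c.natDegree : ℤ) : WithBot ℤ) + rdeg s p := by
  have key : ∀ i : Fin m, WithBot.map (fun d : ℕ => (d : ℤ) + s i) ((c • p) i).degree
      = ((c.natDegree : ℤ) : WithBot ℤ) + WithBot.map (fun d : ℕ => (d : ℤ) + s i) (p i).degree := by
    intro i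
    rcases eq_or_ne (p i) 0 with h0 | h0
    · simp only [Pi.smul_apply, smul_eq_mul, h0, mul_zero, degree_zero, WithBot.map_bot]
      rfl
    · have : (c • p) i = c * p i := rfl
      rw [this, degree_mul, degree_eq_natDegree hc, degree_eq_natDegree h0,
        Nat.cast_withBot, Nat.cast_withBot, ← WithBot.coe_add, WithBot.map_coe,
        WithBot.map_coe, ← WithBot.coe_add]
      rw [WithBot.coe_eq_coe]
      push_cast
      ring
  unfold rdeg
  rw [Finset.sup_congr rfl fun i _ => key i]
  rcases Finset.univ.eq_empty_or_nonempty (α := Fin m) with he | hne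
  · rw [he]; simp [Finset.sup_empty]
  · refine (Finset.comp_sup_eq_sup_comp (fun x => ((c.natDegree : ℤ) : WithBot ℤ) + x)
      (fun x y => ?_) (by simp [WithBot.add_bot])).symm
    rcases le_total x y with h | h
    · rw [sup_eq_right.mpr h, sup_eq_right.mpr (add_le_add le_rfl h)]
    · rw [sup_eq_left.mpr h, sup_eq_left.mpr (add_le_add le_rfl h)]

lemma rdeg_add_le {p q : Fin m → K[X]} {D : ℤ}
    (hp : rdeg s p ≤ (D : WithBot ℤ)) (hq : rdeg s q ≤ (D : WithBot ℤ)) :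
    rdeg s (p + q) ≤ (D : WithBot ℤ) := by
  rw [rdeg_le_iff] at *
  intro j e he
  simp [Pi.add_apply, coeff_add, hp j e he, hq j e he]

lemma rdeg_sum_le {ι : Type*} {t : Finset ι} {f : ι → Fin m → K[X]} {D : ℤ}
    (h : ∀ i ∈ t, rdeg s (f i) ≤ (D : WithBot ℤ)) :
    rdeg s (∑ i ∈ t, f i) ≤ (D : WithBot ℤ) := by
  classical
  induction t using Finset.induction_on with
  | empty => simp [rdeg_le_iff]
  | @insert a t' hni ih =>
      rw [Finset.sum_insert hni]
      exact rdeg_add_le (h a (Finset.mem_insert_self a t'))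
        (ih fun i hi => h i (Finset.mem_insert_of_mem hi))

lemma natDegree_le_of_rdeg {p : Fin m → K[X]} {j : Fin m} (hj : p j ≠ 0) :
    ((p j).natDegree : ℤ) + s j ≤ (rdeg s p).unbotD 0 := by
  have hp : p ≠ 0 := fun h => hj (congrFun h j)
  have h1 := coe_le_rdeg (s := s) hj
  rw [rdeg_eq_coe hp, WithBot.coe_le_coe] at h1
  exact h1

lemma coeffRow_smul_eq (c : K[X]) (p : Fin m → K[X]) :
    coeffRow s ((c.natDegree : ℤ) + (rdeg s p).unbotD 0) (c • p)
      = c.leadingCoeff • leadingRow s p := by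
  set t : ℤ := (rdeg s p).unbotD 0 with ht
  funext j
  simp only [coeffRow, leadingRow, Pi.smul_apply, smul_eq_mul, ← ht]
  rcases le_or_gt (s j) t with hle | hlt
  · have h1 : 0 ≤ (c.natDegree : ℤ) + t - s j := by omega
    have h2 : 0 ≤ t - s j := by omega
    rw [if_pos h1, if_pos h2]
    have h3 : ((c.natDegree : ℤ) + t - s j).toNat = c.natDegree + (t - s j).toNat := by omega
    rw [h3]
    rcases eq_or_ne (p j) 0 with h0 | h0
    · simp [h0]
    · rw [coeff_mul_add_eq_of_natDegree_le le_rfl ?_]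
      · rfl
      · have := natDegree_le_of_rdeg (s := s) h0
        omega
  · have h0 : p j = 0 := by
      by_contra h0
      have := natDegree_le_of_rdeg (s := s) h0
      omega
    rw [if_neg (by omega : ¬ 0 ≤ t - s j)]
    simp [h0]

/-- Predictable degree property: for an `s`-reduced family `P`, any combination
`∑ c i • P i` with `c i0 ≠ 0` has `s`-degree at least that of `P i0`. -/
lemma rdeg_le_rdeg_sum {ι : Type*} [Fintype ι] {P : ι → Fin m → K[X]}
    (hP : ∀ i, P i ≠ 0)
    (hli : LinearIndependent K fun i => leadingRow s (P i))
    (c : ι → K[X]) {i0 : ι} (hc0 : c i0 ≠ 0) :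
    rdeg s (P i0) ≤ rdeg s (∑ i, c i • P i) := by
  classical
  set g : ι → ℤ := fun i => ((c i).natDegree : ℤ) + (rdeg s (P i)).unbotD 0 with hg
  set supp : Finset ι := Finset.univ.filter (fun i => c i ≠ 0) with hsupp
  have hi0 : i0 ∈ supp := by simp [hsupp, hc0]
  obtain ⟨i1, hi1, hmax⟩ := supp.exists_max_image g ⟨i0, hi0⟩
  have hci1 : c i1 ≠ 0 := by simpa [hsupp] using hi1
  set D : ℤ := g i1 with hD
  have hrow : coeffRow s D (∑ i, c i • P i)
      = ∑ i, (if c i ≠ 0 ∧ g i = D then (c i).leadingCoeff else 0) • leadingRow s (P i) := by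
    rw [coeffRow_sum]
    refine Finset.sum_congr rfl fun i _ => ?_
    by_cases hci : c i = 0
    · have h00 : c i • P i = 0 := by rw [hci, zero_smul]
      rw [h00, if_neg (by tauto), zero_smul]
      funext j; simp [coeffRow]
    · by_cases hgi : g i = D
      · rw [if_pos ⟨hci, hgi⟩, ← hgi]
        exact coeffRow_smul_eq (c i) (P i)
      · rw [if_neg (by tauto), zero_smul]
        refine coeffRow_eq_zero_of_rdeg_lt ?_
        rw [rdeg_smul hci, rdeg_eq_coe (hP i), ← WithBot.coe_add, WithBot.coe_lt_coe]
        have hle : ((c i).natDegree : ℤ) + (rdeg s (P i)).unbotD 0 ≤ D :=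
          hmax i (by simp [hsupp, hci])
        have hgi' : ((c i).natDegree : ℤ) + (rdeg s (P i)).unbotD 0 ≠ D := hgi
        omega
  have hne : coeffRow s D (∑ i, c i • P i) ≠ 0 := by
    rw [hrow]
    intro h0
    have := Fintype.linearIndependent_iff.mp hli
      (fun i => if c i ≠ 0 ∧ g i = D then (c i).leadingCoeff else 0) h0 i1
    rw [if_pos ⟨hci1, rfl⟩] at this
    exact leadingCoeff_ne_zero.mpr hci1 this
  have hDle : (D : WithBot ℤ) ≤ rdeg s (∑ i, c i • P i) := rdeg_le_of_coeffRow_ne hne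
  refine le_trans ?_ hDle
  rw [rdeg_eq_coe (hP i0), WithBot.coe_le_coe]
  have h1 : ((c i0).natDegree : ℤ) + (rdeg s (P i0)).unbotD 0 ≤ D := hmax i0 hi0
  have : (0 : ℤ) ≤ ((c i0).natDegree : ℤ) := by positivity
  omega

section Update
variable {R : Type*} [CommRing R] [IsDomain R] {V : Type*} [AddCommGroup V] [Module R V]
  {k : ℕ} (B : Fin k → V) (c : Fin k → R) (i0 : Fin k)

lemma sum_smul_update (g : Fin k → R) :
    ∑ i, g i • Function.update B i0 (∑ i, c i • B i) i
      = ∑ i, ((if i = i0 then 0 else g i) + g i0 * c i) • B i := by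
  classical
  have step1 : ∀ i, g i • Function.update B i0 (∑ i, c i • B i) i
      = (if i = i0 then 0 else g i) • B i
        + (if i = i0 then g i0 else 0) • (∑ i, c i • B i) := by
    intro i
    by_cases hi : i = i0
    · subst hi; simp [Function.update_self]
    · simp [Function.update_of_ne hi, hi]
  rw [Finset.sum_congr rfl fun i _ => step1 i, Finset.sum_add_distrib,
    ← Finset.sum_smul, Finset.sum_ite_eq' Finset.univ i0 (fun _ => g i0)]
  simp only [Finset.mem_univ, if_true, Finset.smul_sum, smul_smul]
  rw [← Finset.sum_add_distrib]
  exact Finset.sum_congr rfl fun i _ => by rw [add_smul]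

lemma span_update (hc : IsUnit (c i0)) :
    Submodule.span R (Set.range (Function.update B i0 (∑ i, c i • B i)))
      = Submodule.span R (Set.range B) := by
  classical
  set q := ∑ i, c i • B i with hq
  apply le_antisymm
  · rw [Submodule.span_le]
    rintro x ⟨i, rfl⟩
    by_cases hi : i = i0
    · subst hi
      rw [Function.update_self]
      exact Submodule.sum_mem _ fun i _ =>
        Submodule.smul_mem _ _ (Submodule.subset_span ⟨i, rfl⟩)
    · rw [Function.update_of_ne hi]
      exact Submodule.subset_span ⟨i, rfl⟩
  · rw [Submodule.span_le]
    rintro x ⟨i, rfl⟩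
    by_cases hi : i = i0
    · rw [hi]
      have hsplit : q = (∑ i, (if i = i0 then 0 else c i) • B i) + c i0 • B i0 := by
        rw [hq]
        have : ∀ i, c i • B i = (if i = i0 then 0 else c i) • B i
            + (if i = i0 then c i0 • B i0 else 0) := by
          intro i
          by_cases hi : i = i0
          · subst hi; simp
          · simp [hi]
        rw [Finset.sum_congr rfl fun i _ => this i, Finset.sum_add_distrib,
          Finset.sum_ite_eq' Finset.univ i0 (fun _ => c i0 • B i0)]
        simp
      have hmem : c i0 • B i0 ∈ Submodule.span R (Set.range (Function.update B i0 q)) := by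
        have h1 : c i0 • B i0 = q - ∑ i, (if i = i0 then 0 else c i) • B i := by
          rw [hsplit]; abel
        rw [h1]
        refine Submodule.sub_mem _ ?_ (Submodule.sum_mem _ fun i _ => ?_)
        · exact Submodule.subset_span ⟨i0, Function.update_self _ _ _⟩
        · by_cases hi : i = i0
          · simp [hi]
          · rw [if_neg hi]
            refine Submodule.smul_mem _ _ (Submodule.subset_span ⟨i, ?_⟩)
            rw [Function.update_of_ne hi]
      have : B i0 = (↑hc.unit⁻¹ : R) • (c i0 • B i0) := by
        rw [smul_smul, IsUnit.val_inv_mul, one_smul]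
      rw [this]
      exact Submodule.smul_mem _ _ hmem
    · refine Submodule.subset_span ⟨i, ?_⟩
      rw [Function.update_of_ne hi]

lemma li_update (hc : IsUnit (c i0)) (hB : LinearIndependent R B) :
    LinearIndependent R (Function.update B i0 (∑ i, c i • B i)) := by
  classical
  rw [Fintype.linearIndependent_iff]
  intro g hg
  rw [sum_smul_update] at hg
  have hall := Fintype.linearIndependent_iff.mp hB _ hg
  have hgi0 : g i0 = 0 := by
    have := hall i0
    rw [if_pos rfl, zero_add] at this
    exact (hc.mul_right_eq_zero.mp (by rwa [mul_comm] at this))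
  intro i
  by_cases hi : i = i0
  · rw [hi]; exact hgi0
  · have := hall i
    rw [if_neg hi, hgi0, zero_mul, add_zero] at this
    exact this

end Update

lemma rdegZ_nonneg (hs : ∀ i, 0 ≤ s i) {p : Fin m → K[X]} (hp : p ≠ 0) :
    0 ≤ (rdeg s p).unbotD 0 := by
  obtain ⟨j, hj⟩ : ∃ j, p j ≠ 0 := by
    by_contra h
    push_neg at h
    exact hp (funext h)
  have h1 := natDegree_le_of_rdeg (s := s) hj
  have h2 := hs j
  have h3 : (0 : ℤ) ≤ ((p j).natDegree : ℤ) := by positivity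
  omega

lemma exists_rowReduced (hs : ∀ i, 0 ≤ s i) (k : ℕ) (B : Fin k → Fin m → K[X])
    (hB : LinearIndependent K[X] B) :
    ∃ B' : Fin k → Fin m → K[X], LinearIndependent K[X] B' ∧
      Submodule.span K[X] (Set.range B') = Submodule.span K[X] (Set.range B) ∧
      LinearIndependent K fun i => leadingRow s (B' i) := by
  classical
  suffices H : ∀ (N : ℕ) (B : Fin k → Fin m → K[X]),
      (∑ i, ((rdeg s (B i)).unbotD 0).toNat) ≤ N → LinearIndependent K[X] B →
      ∃ B' : Fin k → Fin m → K[X], LinearIndependent K[X] B' ∧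
        Submodule.span K[X] (Set.range B') = Submodule.span K[X] (Set.range B) ∧
        LinearIndependent K fun i => leadingRow s (B' i) from
    H _ B le_rfl hB
  intro N
  induction N using Nat.strong_induction_on with
  | _ N IH =>
  intro B hμ hB
  by_cases hred : LinearIndependent K fun i => leadingRow s (B i)
  · exact ⟨B, hB, rfl, hred⟩
  obtain ⟨g, hgsum, i0', hgi0'⟩ := Fintype.not_linearIndependent_iff.mp hred
  set supp : Finset (Fin k) := Finset.univ.filter (fun i => g i ≠ 0) with hsuppdef
  have hi0'supp : i0' ∈ supp := by simp [hsuppdef, hgi0']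
  obtain ⟨i0, hi0supp, hmax⟩ := supp.exists_max_image
    (fun i => (rdeg s (B i)).unbotD 0) ⟨i0', hi0'supp⟩
  have hgi0 : g i0 ≠ 0 := by simpa [hsuppdef] using hi0supp
  have hBne : ∀ i, B i ≠ 0 := fun i => hB.ne_zero i
  set t : Fin k → ℤ := fun i => (rdeg s (B i)).unbotD 0 with ht
  have htle : ∀ i, g i ≠ 0 → t i ≤ t i0 := fun i hi => hmax i (by simp [hsuppdef, hi])
  set c : Fin k → K[X] := fun i => monomial ((t i0 - t i).toNat) (g i) with hc
  have hcnat : ∀ i, g i ≠ 0 → ((c i).natDegree : ℤ) + t i = t i0 := by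
    intro i hi
    have h1 : (c i).natDegree = (t i0 - t i).toNat := by
      rw [hc]; simp [natDegree_monomial, hi]
    have := htle i hi
    omega
  have hcne : ∀ i, g i ≠ 0 → c i ≠ 0 := by
    intro i hi h0
    rw [hc] at h0
    simp only [monomial_eq_zero_iff] at h0
    exact hi h0
  have hcu : IsUnit (c i0) := by
    have h0 : (t i0 - t i0).toNat = 0 := by omega
    rw [hc]
    simp only [h0, monomial_zero_left]
    exact isUnit_C.mpr (Ne.isUnit hgi0)
  set q : Fin m → K[X] := ∑ i, c i • B i with hq
  -- rdeg of q is < t i0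
  have hqle : rdeg s q ≤ ((t i0 : ℤ) : WithBot ℤ) := by
    refine rdeg_sum_le fun i _ => ?_
    by_cases hi : g i = 0
    · have : c i • B i = 0 := by rw [hc]; simp [hi]
      rw [this, rdeg_eq_bot_iff.mpr rfl]
      exact bot_le
    · rw [rdeg_smul (hcne i hi), rdeg_eq_coe (hBne i), ← WithBot.coe_add]
      rw [WithBot.coe_le_coe]
      rw [hcnat i hi]
  have hqrow : coeffRow s (t i0) q = 0 := by
    rw [hq, coeffRow_sum]
    have : ∀ i ∈ Finset.univ, coeffRow s (t i0) (c i • B i) = g i • leadingRow s (B i) := by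
      intro i _
      by_cases hi : g i = 0
      · have h0 : c i • B i = 0 := by rw [hc]; simp [hi]
        rw [h0, hi, zero_smul]
        funext j; simp [coeffRow]
      · have hidx : (t i0) = ((c i).natDegree : ℤ) + (rdeg s (B i)).unbotD 0 :=
          (hcnat i hi).symm
        rw [hidx, coeffRow_smul_eq]
        have hlc : (c i).leadingCoeff = g i := by
          rw [hc]; simp [leadingCoeff_monomial]
        rw [hlc]
    rw [Finset.sum_congr rfl this]
    exact hgsum
  have hqlt : rdeg s q < ((t i0 : ℤ) : WithBot ℤ) := by
    refine lt_of_le_of_ne hqle fun heq => ?_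
    -- if equal, then q ≠ 0 and for each j with t i0 - s j ≥ 0 the top coefficient vanishes
    -- show rdeg s q ≤ t i0 - 1, contradiction with equality
    have hle' : rdeg s q ≤ ((t i0 - 1 : ℤ) : WithBot ℤ) := by
      rw [rdeg_le_iff]
      intro j e he
      rcases lt_or_ge (t i0) ((e : ℤ) + s j) with hgt | hle2
      · exact coeff_eq_zero_of_rdeg_lt (lt_of_le_of_lt hqle (by exact_mod_cast hgt))
      · have heq2 : (e : ℤ) + s j = t i0 := by omega
        have h0 : (0 : ℤ) ≤ t i0 - s j := by omega
        have := congrFun hqrow j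
        simp only [coeffRow, if_pos h0, Pi.zero_apply] at this
        have he' : (t i0 - s j).toNat = e := by omega
        rwa [he'] at this
    rw [heq] at hle'
    rw [WithBot.coe_le_coe] at hle'
    omega
  have hqne : q ≠ 0 := by
    intro h0
    have := Fintype.linearIndependent_iff.mp hB c (by rw [← hq, h0]) i0
    exact hcne i0 hgi0 this
  -- measure decreases
  set B' : Fin k → Fin m → K[X] := Function.update B i0 q with hB'
  have hli' : LinearIndependent K[X] B' := li_update B c i0 hcu hB
  have hspan' : Submodule.span K[X] (Set.range B') = Submodule.span K[X] (Set.range B) :=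
    span_update B c i0 hcu
  have hmeas : (∑ i, ((rdeg s (B' i)).unbotD 0).toNat) < ∑ i, ((rdeg s (B i)).unbotD 0).toNat := by
    refine Finset.sum_lt_sum (fun i _ => ?_) ⟨i0, Finset.mem_univ i0, ?_⟩
    · by_cases hi : i = i0
      · rw [hi, hB', Function.update_self]
        have hq0 : 0 ≤ (rdeg s q).unbotD 0 := rdegZ_nonneg hs hqne
        have h2 : (rdeg s q).unbotD 0 < (rdeg s (B i0)).unbotD 0 := by
          rw [rdeg_eq_coe hqne, WithBot.coe_lt_coe] at hqlt
          exact hqlt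
        omega
      · rw [hB', Function.update_of_ne hi]
    · rw [hB', Function.update_self]
      have hq0 : 0 ≤ (rdeg s q).unbotD 0 := rdegZ_nonneg hs hqne
      have h2 : (rdeg s q).unbotD 0 < (rdeg s (B i0)).unbotD 0 := by
        rw [rdeg_eq_coe hqne, WithBot.coe_lt_coe] at hqlt
        exact hqlt
      omega
  obtain ⟨B'', h1, h2, h3⟩ := IH (∑ i, ((rdeg s (B' i)).unbotD 0).toNat)
    (lt_of_lt_of_le hmeas hμ) B' le_rfl hli'
  exact ⟨B'', h1, h2.trans hspan', h3⟩

lemma leadingRow_zero : leadingRow s (0 : Fin m → K[X]) = 0 := by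
  funext j
  simp [leadingRow]

end Aux

open Aux

/-- Rows of small `s`-degree in `A_M(F)` are in the kernel of `F`. -/
lemma small_mem_ker {K : Type*} [Field K] {m n : ℕ} (F : Matrix (Fin m) (Fin n) K[X]) (d : ℕ)
    (hF : ∀ i j, (F i j).degree ≤ (d : WithBot ℕ)) (s : Fin m → ℕ) (δ : ℕ) (hδ : 0 < δ)
    (M : K[X]) (hM : ((δ + d : ℕ) : WithBot ℕ) ≤ M.degree)
    {p : Fin m → K[X]} (hpA : ∀ j, M ∣ (p ᵥ* F) j)
    (hps : rdeg (fun i => (s i : ℤ)) p < ((δ : ℤ) : WithBot ℤ)) :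
    p ᵥ* F = 0 := by
  funext j
  have hdeg : ∀ i, (p i).degree ≤ ((δ - 1 : ℕ) : WithBot ℕ) := by
    intro i
    rcases eq_or_ne (p i) 0 with h0 | h0
    · simp [h0]
    · have h1 := coe_le_rdeg (s := fun i => (s i : ℤ)) h0
      have h2 : (p i).natDegree + s i < δ := by
        have h3 := lt_of_le_of_lt h1 hps
        change ((((p i).natDegree : ℤ) + (s i : ℤ) : ℤ) : WithBot ℤ)
          < (((δ : ℤ)) : WithBot ℤ) at h3
        exact_mod_cast h3
      rw [degree_eq_natDegree h0]
      have : (p i).natDegree ≤ δ - 1 := by omega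
      exact_mod_cast this
  have hentry : (p ᵥ* F) j = ∑ i, p i * F i j := by
    simp [Matrix.vecMul, dotProduct]
  have hdlt : ((p ᵥ* F) j).degree < M.degree := by
    rw [hentry]
    have h1 : (∑ i, p i * F i j).degree ≤ ((δ - 1 + d : ℕ) : WithBot ℕ) := by
      refine (degree_sum_le _ _).trans (Finset.sup_le fun i _ => ?_)
      refine (degree_mul_le _ _).trans ?_
      refine le_trans (add_le_add (hdeg i) (hF i j)) ?_
      exact_mod_cast le_refl _
    have h2 : ((δ - 1 + d : ℕ) : WithBot ℕ) < ((δ + d : ℕ) : WithBot ℕ) := by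
      exact_mod_cast (by omega : δ - 1 + d < δ + d)
    exact lt_of_le_of_lt h1 (lt_of_lt_of_le h2 hM)
  exact eq_zero_of_dvd_of_degree_lt (hpA j) hdlt

/-- let `F ∈ K[x]^{m×n}` of degree at most `d`, `s ∈ ℕ^m`, and `δ > 0`
be such that every `s`-reduced left kernel basis of `F` has all rows of `s`-degree
less than `δ`. If `deg M ≥ δ + d` and `P` is an `s`-reduced matrix whose rows form
a basis of `A_M(F)`, then the rows of `P` of `s`-degree less than `δ` form an
`s`-reduced left kernel basis of `F`. -/
theorem stmt0 {K : Type*} [Field K] {m n : ℕ} (F : Matrix (Fin m) (Fin n) K[X]) (d : ℕ)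
    (hF : ∀ i j, (F i j).degree ≤ (d : WithBot ℕ))
    (s : Fin m → ℕ) (δ : ℕ) (hδ : 0 < δ)
    (hbound : ∀ (k : ℕ) (B : Fin k → Fin m → K[X]),
      IsBasisOf B (kernelModule F) → IsRowReduced (fun i => (s i : ℤ)) B →
      ∀ i, rdeg (fun i => (s i : ℤ)) (B i) < ((δ : ℤ) : WithBot ℤ))
    (M : K[X]) (hM : ((δ + d : ℕ) : WithBot ℕ) ≤ M.degree)
    (P : Matrix (Fin m) (Fin m) K[X])
    (hred : IsUnit (Matrix.of fun i j => leadingRow (fun i => (s i : ℤ)) (P i) j :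
      Matrix (Fin m) (Fin m) K))
    (hbasis : IsBasisOf (fun i => P i) (approxModule M F)) :
    IsBasisOf
        (fun i : {i : Fin m // rdeg (fun i => (s i : ℤ)) (P i) < ((δ : ℤ) : WithBot ℤ)} =>
          P i.1)
        (kernelModule F) ∧
      IsRowReduced (fun i => (s i : ℤ))
        (fun i : {i : Fin m // rdeg (fun i => (s i : ℤ)) (P i) < ((δ : ℤ) : WithBot ℤ)} =>
          P i.1) := by
  classical
  have hs0 : ∀ i, 0 ≤ (fun i => (s i : ℤ)) i := fun i => Int.ofNat_nonneg _
  have hlr : LinearIndependent K fun i => leadingRow (fun i => (s i : ℤ)) (P i) :=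
    Matrix.linearIndependent_rows_iff_isUnit.mpr hred
  have hPne : ∀ i, P i ≠ 0 := by
    intro i h0
    have h1 := hlr.ne_zero i
    rw [h0, Aux.leadingRow_zero] at h1
    exact h1 rfl
  have hPspan := hbasis.2
  have hkerA : kernelModule F ≤ approxModule M F := by
    intro p hp
    simp only [kernelModule, LinearMap.mem_ker, Matrix.vecMulLinear_apply] at hp
    intro j
    rw [hp]
    simp
  have hsmallker : ∀ p ∈ approxModule M F,
      rdeg (fun i => (s i : ℤ)) p < ((δ : ℤ) : WithBot ℤ) → p ∈ kernelModule F := by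
    intro p hp hlt
    simp only [kernelModule, LinearMap.mem_ker, Matrix.vecMulLinear_apply]
    exact small_mem_ker F d hF s δ hδ M hM hp hlt
  obtain ⟨k0, b⟩ := Submodule.basisOfPid (Pi.basisFun K[X] (Fin m)) (kernelModule F)
  set B0 : Fin k0 → (Fin m → K[X]) := fun i => (b i : Fin m → K[X]) with hB0
  have hB0li : LinearIndependent K[X] B0 :=
    b.linearIndependent.map' (kernelModule F).subtype (Submodule.ker_subtype _)
  have hB0span : Submodule.span K[X] (Set.range B0) = kernelModule F := by
    have h1 : Set.range B0 = (kernelModule F).subtype '' Set.range b := by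
      rw [← Set.range_comp]; rfl
    rw [h1, ← Submodule.map_span, b.span_eq, Submodule.map_subtype_top]
  obtain ⟨B', hB'li, hB'span, hB'red⟩ := Aux.exists_rowReduced hs0 k0 B0 hB0li
  rw [hB0span] at hB'span
  have hB'small : ∀ i, rdeg (fun i => (s i : ℤ)) (B' i) < ((δ : ℤ) : WithBot ℤ) :=
    hbound k0 B' ⟨hB'li, hB'span⟩ hB'red
  have hB'memsmall : ∀ i, B' i ∈ Submodule.span K[X]
      (Set.range fun i : {i : Fin m // rdeg (fun i => (s i : ℤ)) (P i)
        < ((δ : ℤ) : WithBot ℤ)} => P i.1) := by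
    intro i
    have h1 : B' i ∈ approxModule M F :=
      hkerA (hB'span ▸ Submodule.subset_span (Set.mem_range_self i))
    rw [← hPspan] at h1
    obtain ⟨c, hc⟩ := (Submodule.mem_span_range_iff_exists_fun K[X]).mp h1
    have hcz : ∀ j, ¬ (rdeg (fun i => (s i : ℤ)) (P j) < ((δ : ℤ) : WithBot ℤ)) → c j = 0 := by
      intro j hj
      by_contra hcj
      have h2 := Aux.rdeg_le_rdeg_sum hPne hlr c hcj
      rw [hc] at h2
      exact hj (lt_of_le_of_lt h2 (hB'small i))
    rw [← hc]
    refine Submodule.sum_mem _ fun j _ => ?_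
    by_cases hj : rdeg (fun i => (s i : ℤ)) (P j) < ((δ : ℤ) : WithBot ℤ)
    · exact Submodule.smul_mem _ _ (Submodule.subset_span ⟨⟨j, hj⟩, rfl⟩)
    · rw [hcz j hj, zero_smul]
      exact Submodule.zero_mem _
  refine ⟨⟨?_, ?_⟩, ?_⟩
  · exact hbasis.1.comp Subtype.val Subtype.val_injective
  · apply le_antisymm
    · rw [Submodule.span_le]
      rintro x ⟨⟨j, hj⟩, rfl⟩
      exact hsmallker _ (hPspan ▸ Submodule.subset_span (Set.mem_range_self j)) hj
    · rw [← hB'span, Submodule.span_le]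
      rintro x ⟨i, rfl⟩
      exact hB'memsmall i
  · exact hlr.comp Subtype.val Subtype.val_injective

end
end

section
/- Let K be a field, D a positive integer, and let H in K(x)^{n×n} admit a right fraction description H = R̃ Q̃^{−1} with Q̃ nonsingular, deg Q̃ ≤ D and deg R̃ < D. Let M in K[x] have degree at least 2D and be coprime to det Q̃, and let H̄ in K[x]^{n×n} be H reduced modulo M (each entry a/b replaced by a·b^{−1} mod M). If q, r in K[x]^{1×n} satisfy deg q ≤ D, deg r < D, and M divides every entry of q·H̄ − r, then q·H = r holds in K(x)^{1×n}. -/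
open Polynomial Matrix

noncomputable section

/-- let `H ∈ K(x)^{n×n}` admit a right fraction description `H = R̃ Q̃⁻¹`
with `Q̃` nonsingular, `deg Q̃ ≤ D`, `deg R̃ < D`. Let `M` have degree at least `2D` and
be coprime to `det Q̃`, and let `H̄` be `H` reduced modulo `M` (each entry `a/b` replaced
by `a·b⁻¹ mod M`). If `q, r` satisfy `deg q ≤ D`, `deg r < D`, and `M` divides every
entry of `q·H̄ − r`, then `q·H = r` over `K(x)`. -/
theorem stmt4 {K : Type*} [Field K] {n : ℕ} (D : ℕ) (hD : 0 < D)
    (H : Matrix (Fin n) (Fin n) (RatFunc K))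
    (Qt Rt : Matrix (Fin n) (Fin n) K[X]) (hQt : Qt.det ≠ 0)
    (hdesc : H * Qt.map (algebraMap K[X] (RatFunc K)) = Rt.map (algebraMap K[X] (RatFunc K)))
    (hQtdeg : ∀ i j, (Qt i j).degree ≤ (D : WithBot ℕ))
    (hRtdeg : ∀ i j, (Rt i j).degree < (D : WithBot ℕ))
    (M : K[X]) (hMdeg : ((2 * D : ℕ) : WithBot ℕ) ≤ M.degree)
    (hcop : IsCoprime M Qt.det)
    (Hbar : Matrix (Fin n) (Fin n) K[X])
    (hHbar : ∀ i j, M ∣ ((H i j).denom * Hbar i j - (H i j).num))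
    (q r : Fin n → K[X])
    (hq : ∀ i, (q i).degree ≤ (D : WithBot ℕ))
    (hr : ∀ i, (r i).degree < (D : WithBot ℕ))
    (hdvd : ∀ j, M ∣ ((q ᵥ* Hbar) j - r j)) :
    (fun i => algebraMap K[X] (RatFunc K) (q i)) ᵥ* H
      = fun j => algebraMap K[X] (RatFunc K) (r j) := by
  set φ := algebraMap K[X] (RatFunc K) with hφ
  set A : Matrix (Fin n) (Fin n) K[X] := Rt * Qt.adjugate with hAdef
  have hadj : (Qt.map ⇑φ).adjugate = Qt.adjugate.map ⇑φ := by
    have := RingHom.map_adjugate φ Qt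
    simpa [RingHom.mapMatrix_apply] using this.symm
  have hdet : (Qt.map ⇑φ).det = φ Qt.det := by
    have := RingHom.map_det φ Qt
    simpa [RingHom.mapMatrix_apply] using this.symm
  -- Step 1: φ (det Qt) • H = A mapped
  have hA : ∀ i j, φ Qt.det * H i j = φ (A i j) := by
    intro i j
    have h1 : H * (Qt.map ⇑φ * (Qt.map ⇑φ).adjugate) = Rt.map ⇑φ * (Qt.map ⇑φ).adjugate := by
      rw [← Matrix.mul_assoc, hdesc]
    rw [Matrix.mul_adjugate, hdet, Matrix.mul_smul, Matrix.mul_one, hadj,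
      ← Matrix.map_mul] at h1
    have := congrFun (congrFun h1 i) j
    simpa [Matrix.smul_apply, smul_eq_mul, hAdef] using this
  -- Step 2: cross multiplication
  have hnum : ∀ i j, Qt.det * (H i j).num = (H i j).denom * A i j := by
    intro i j
    apply RatFunc.algebraMap_injective K
    have hden : φ (H i j).denom ≠ 0 := RatFunc.algebraMap_ne_zero (RatFunc.denom_ne_zero _)
    have hnd : φ (H i j).num = H i j * φ (H i j).denom := by
      have := RatFunc.num_div_denom (H i j)
      rwa [div_eq_iff hden] at this
    rw [_root_.map_mul, _root_.map_mul, hnd, ← hA i j]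
    ring
  -- Step 3: denom divides det
  have hdd : ∀ i j, (H i j).denom ∣ Qt.det := by
    intro i j
    refine (RatFunc.isCoprime_num_denom (H i j)).symm.dvd_of_dvd_mul_right ?_
    rw [hnum i j]
    exact dvd_mul_right _ _
  have hMden : ∀ i j, IsCoprime M (H i j).denom := fun i j =>
    hcop.of_isCoprime_of_dvd_right (hdd i j)
  -- Step 4: M ∣ det • Hbar - A
  have hkey : ∀ i j, M ∣ Qt.det * Hbar i j - A i j := by
    intro i j
    refine (hMden i j).dvd_of_dvd_mul_left ?_
    have h1 : M ∣ Qt.det * ((H i j).denom * Hbar i j - (H i j).num) := (hHbar i j).mul_left _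
    have e : (H i j).denom * (Qt.det * Hbar i j - A i j)
        = Qt.det * ((H i j).denom * Hbar i j - (H i j).num) := by
      linear_combination (hnum i j)
    rw [e]; exact h1
  -- Step 5
  have h1 : ∀ k, M ∣ (q ᵥ* A) k - Qt.det * r k := by
    intro k
    have s1 : ∑ i, q i * (A i k - Qt.det * Hbar i k)
        = (∑ i, q i * A i k) - ∑ i, Qt.det * (q i * Hbar i k) := by
      rw [← Finset.sum_sub_distrib]
      exact Finset.sum_congr rfl fun i _ => by ring
    have s2 : Qt.det * ((∑ i, q i * Hbar i k) - r k)
        = (∑ i, Qt.det * (q i * Hbar i k)) - Qt.det * r k := by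
      rw [mul_sub, Finset.mul_sum]
    have e : (∑ i, q i * A i k) - Qt.det * r k
        = (∑ i, q i * (A i k - Qt.det * Hbar i k))
          + Qt.det * ((∑ i, q i * Hbar i k) - r k) := by
      rw [s1, s2]; ring
    have hgoal : (q ᵥ* A) k - Qt.det * r k = (∑ i, q i * A i k) - Qt.det * r k := rfl
    rw [hgoal, e]
    refine dvd_add (Finset.dvd_sum fun i _ => Dvd.dvd.mul_left ?_ (q i)) ?_
    · have := dvd_neg.mpr (hkey i k)
      rwa [neg_sub] at this
    · have hd := hdvd k
      have : (q ᵥ* Hbar) k = ∑ i, q i * Hbar i k := rfl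
      rw [this] at hd
      exact hd.mul_left _
  -- Step 6
  set x : Fin n → K[X] := q ᵥ* Rt - r ᵥ* Qt with hxdef
  have e1 : x ᵥ* Qt.adjugate = fun k => (q ᵥ* A) k - Qt.det * r k := by
    funext k
    rw [hxdef, Matrix.sub_vecMul, Matrix.vecMul_vecMul, Matrix.vecMul_vecMul,
      Matrix.mul_adjugate, ← hAdef]
    simp [Matrix.vecMul, dotProduct, Matrix.smul_apply, Matrix.one_apply,
      mul_ite, mul_comm, Finset.mul_sum]
  have hdetx : ∀ j, M ∣ Qt.det * x j := by
    intro j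
    have e2 : Qt.det * x j = ∑ k, ((q ᵥ* A) k - Qt.det * r k) * Qt k j := by
      have e3 : ((x ᵥ* Qt.adjugate) ᵥ* Qt) j = ∑ k, ((q ᵥ* A) k - Qt.det * r k) * Qt k j := by
        rw [e1]
        simp [Matrix.vecMul, dotProduct]
      rw [← e3, Matrix.vecMul_vecMul, Matrix.adjugate_mul]
      simp [Matrix.vecMul, dotProduct, Matrix.smul_apply, Matrix.one_apply,
        mul_ite, mul_comm, Finset.mul_sum]
    rw [e2]
    exact Finset.dvd_sum fun k _ => (h1 k).mul_right _
  have hMx : ∀ j, M ∣ x j := fun j => hcop.dvd_of_dvd_mul_left (hdetx j)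
  -- Step 7: degrees
  have hDne : ((D : ℕ) : WithBot ℕ) ≠ ⊥ := by
    rw [Nat.cast_withBot]; exact WithBot.coe_ne_bot
  have hcast : ((2 * D : ℕ) : WithBot ℕ) = (D : WithBot ℕ) + (D : WithBot ℕ) := by
    rw [Nat.cast_withBot, Nat.cast_withBot, two_mul, WithBot.coe_add]
  have hbot : (⊥ : WithBot ℕ) < (D : WithBot ℕ) + (D : WithBot ℕ) := by
    rw [← hcast, Nat.cast_withBot]; exact WithBot.bot_lt_coe _
  have hx0 : ∀ j, x j = 0 := by
    intro j
    refine Polynomial.eq_zero_of_dvd_of_degree_lt (hMx j) (lt_of_lt_of_le ?_ hMdeg)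
    have hxj : x j = (∑ i, q i * Rt i j) - (∑ i, r i * Qt i j) := by
      simp [hxdef, Matrix.vecMul, dotProduct]
    rw [hxj, hcast]
    refine lt_of_le_of_lt (Polynomial.degree_sub_le _ _) (max_lt ?_ ?_)
    · refine lt_of_le_of_lt (Polynomial.degree_sum_le _ _) ((Finset.sup_lt_iff hbot).mpr ?_)
      intro i _
      refine lt_of_le_of_lt (Polynomial.degree_mul_le _ _) ?_
      rcases eq_or_ne (q i).degree ⊥ with hb | hb
      · rw [hb, WithBot.bot_add]; exact hbot
      · exact WithBot.add_lt_add_of_le_of_lt hb (hq i) (hRtdeg i j)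
    · refine lt_of_le_of_lt (Polynomial.degree_sum_le _ _) ((Finset.sup_lt_iff hbot).mpr ?_)
      intro i _
      refine lt_of_le_of_lt (Polynomial.degree_mul_le _ _) ?_
      rcases eq_or_ne (Qt i j).degree ⊥ with hb | hb
      · rw [hb, WithBot.add_bot]; exact hbot
      · exact WithBot.add_lt_add_of_lt_of_le hb (hr i) (hQtdeg i j)
  have hpoly : q ᵥ* Rt = r ᵥ* Qt := by
    funext j
    exact sub_eq_zero.mp (hx0 j)
  -- Step 8: conclude over RatFunc
  have hdetu : IsUnit (Qt.map ⇑φ).det := by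
    rw [hdet]
    exact isUnit_iff_ne_zero.mpr (RatFunc.algebraMap_ne_zero hQt)
  have key : ((fun i => φ (q i)) ᵥ* H) ᵥ* (Qt.map ⇑φ) = (fun j => φ (r j)) ᵥ* (Qt.map ⇑φ) := by
    rw [Matrix.vecMul_vecMul, hdesc]
    funext j
    simp only [Matrix.vecMul, dotProduct, Matrix.map_apply, ← _root_.map_mul,
      ← map_sum]
    exact congrArg φ (congrFun hpoly j)
  have hfin := congrArg (· ᵥ* (Qt.map ⇑φ)⁻¹) key
  simp only [Matrix.vecMul_vecMul, Matrix.mul_assoc, Matrix.mul_nonsing_inv _ hdetu,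
    Matrix.mul_one, Matrix.vecMul_one] at hfin
  exact hfin

end
end

section
/- Let K be a field, let E = (E_1,…,E_D) be matrices in K^{m×n}, and let α = (α_1,…,α_D) be pairwise distinct points of K. Fix 1 ≤ k < D. Let P_1 in K[x]^{m×m} be nonsingular with rows forming a K[x]-basis of I_{(α_1,…,α_k)}(E_1,…,E_k), define R_i = P_1(α_i)·E_i in K^{m×n} for k < i ≤ D, and let P_2 in K[x]^{m×m} be nonsingular with rows forming a K[x]-basis of I_{(α_{k+1},…,α_D)}(R_{k+1},…,R_D). Then the rows of the product P_2·P_1 form a K[x]-basis of I_α(E). -/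
open Polynomial Matrix

noncomputable section

/-- The module `I_α(E)` of row vectors `p ∈ K[x]^{1×m}` with `p(α_i)·E_i = 0` for all `i`. -/
def intModule {K : Type*} [Field K] {m n D : ℕ} (α : Fin D → K)
    (E : Fin D → Matrix (Fin m) (Fin n) K) : Submodule K[X] (Fin m → K[X]) where
  carrier := {p | ∀ i, (fun k => (p k).eval (α i)) ᵥ* E i = 0}
  add_mem' := by
    intro p q hp hq i
    have h : (fun k => ((p + q) k).eval (α i))
        = (fun k => (p k).eval (α i)) + fun k => (q k).eval (α i) := by
      funext k; simp
    rw [h, Matrix.add_vecMul, hp i, hq i, add_zero]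
  zero_mem' := by
    intro i
    have h : (fun k => ((0 : Fin m → K[X]) k).eval (α i)) = (0 : Fin m → K) := by
      funext k; simp
    rw [h, Matrix.zero_vecMul]
  smul_mem' := by
    intro c p hp i
    have h : (fun k => ((c • p) k).eval (α i))
        = c.eval (α i) • fun k => (p k).eval (α i) := by
      funext k; simp
    rw [h, Matrix.smul_vecMul, hp i, smul_zero]

lemma rows_li {R : Type*} [CommRing R] [IsDomain R] {m : ℕ}
    (M : Matrix (Fin m) (Fin m) R) (h : M.det ≠ 0) :
    LinearIndependent R (fun i => M i) := by
  rw [Fintype.linearIndependent_iff]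
  intro g hg
  have hv : g ᵥ* M = 0 := by
    funext j
    have := congrFun hg j
    simpa [Matrix.vecMul, dotProduct, Finset.sum_apply] using this
  have h2 : M.det • g = 0 := by
    have h3 : (g ᵥ* M) ᵥ* M.adjugate = 0 := by rw [hv, Matrix.zero_vecMul]
    rw [Matrix.vecMul_vecMul, Matrix.mul_adjugate] at h3
    funext i
    have := congrFun h3 i
    simpa [Matrix.vecMul, dotProduct, Matrix.one_apply, mul_comm] using this
  intro i
  have := congrFun h2 i
  simp only [Pi.smul_apply, Pi.zero_apply, smul_eq_mul] at this
  rcases mul_eq_zero.mp this with h' | h'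
  · exact absurd h' h
  · exact h'

lemma mem_span_rows {R : Type*} [CommRing R] {m n' : ℕ}
    (M : Matrix (Fin m) (Fin n') R) (x : Fin n' → R) :
    x ∈ Submodule.span R (Set.range fun i => M i) ↔ ∃ v, v ᵥ* M = x := by
  rw [Submodule.mem_span_range_iff_exists_fun]
  constructor
  · rintro ⟨c, hc⟩
    exact ⟨c, by funext j; rw [← hc]; simp [Matrix.vecMul, dotProduct, Finset.sum_apply]⟩
  · rintro ⟨v, hv⟩
    exact ⟨v, by funext j; rw [← hv]; simp [Matrix.vecMul, dotProduct, Finset.sum_apply]⟩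

lemma evalMap_vecMul {K : Type*} [Field K] {m m' : ℕ} (v : Fin m → K[X])
    (P : Matrix (Fin m) (Fin m') K[X]) (a : K) :
    (fun j => ((v ᵥ* P) j).eval a) = (fun i => (v i).eval a) ᵥ* P.map (Polynomial.eval a) := by
  funext j
  simp [Matrix.vecMul, dotProduct, Polynomial.eval_finset_sum]

lemma mem_intModule_iff {K : Type*} [Field K] {m n D : ℕ} (α : Fin D → K)
    (E : Fin D → Matrix (Fin m) (Fin n) K) (p : Fin m → K[X]) :
    p ∈ intModule α E ↔ ∀ i, (fun k => (p k).eval (α i)) ᵥ* E i = 0 := Iff.rfl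

/-- with `D = k + l` points (`1 ≤ k`, `1 ≤ l`, so `1 ≤ k < D`), if the rows
of the nonsingular `P₁` form a basis of the interpolant module for the first `k` points,
`R_i = P₁(α_i)·E_i` for the last `l` points, and the rows of the nonsingular `P₂` form a
basis of the interpolant module for `(R_i)` at the last `l` points, then the rows of
`P₂·P₁` form a basis of `I_α(E)`. -/
theorem stmt7 {K : Type*} [Field K] {m n k l : ℕ} (hk : 0 < k) (hl : 0 < l)
    (α : Fin (k + l) → K) (hα : Function.Injective α)
    (E : Fin (k + l) → Matrix (Fin m) (Fin n) K)
    (P₁ P₂ : Matrix (Fin m) (Fin m) K[X])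
    (hP₁ : P₁.det ≠ 0) (hP₂ : P₂.det ≠ 0)
    (hP₁basis : IsBasisOf (fun i => P₁ i)
      (intModule (fun i : Fin k => α (Fin.castAdd l i))
        (fun i : Fin k => E (Fin.castAdd l i))))
    (hP₂basis : IsBasisOf (fun i => P₂ i)
      (intModule (fun i : Fin l => α (Fin.natAdd k i))
        (fun i : Fin l =>
          P₁.map (Polynomial.eval (α (Fin.natAdd k i))) * E (Fin.natAdd k i)))) :
    IsBasisOf (fun i => (P₂ * P₁) i) (intModule α E) := by
  obtain ⟨hP₁li, hP₁span⟩ := hP₁basis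
  obtain ⟨hP₂li, hP₂span⟩ := hP₂basis
  constructor
  · exact rows_li _ (by rw [Matrix.det_mul]; exact mul_ne_zero hP₂ hP₁)
  · apply le_antisymm
    · rw [Submodule.span_le]
      rintro _ ⟨j, rfl⟩
      have hrow : (P₂ * P₁) j = (P₂ j) ᵥ* P₁ := by
        funext c; simp [Matrix.mul_apply, Matrix.vecMul, dotProduct]
      have hmem1 : (P₂ j) ᵥ* P₁ ∈ intModule (fun i : Fin k => α (Fin.castAdd l i))
          (fun i : Fin k => E (Fin.castAdd l i)) := by
        rw [← hP₁span, mem_span_rows]; exact ⟨P₂ j, rfl⟩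
      have hrw : (fun i => (P₂ * P₁) i) j = P₂ j ᵥ* P₁ := hrow
      rw [hrw]
      intro i
      induction i using Fin.addCases with
      | left i₀ =>
        exact hmem1 i₀
      | right i₀ =>
        have hmem2 : P₂ j ∈ intModule (fun i : Fin l => α (Fin.natAdd k i))
            (fun i : Fin l =>
              P₁.map (Polynomial.eval (α (Fin.natAdd k i))) * E (Fin.natAdd k i)) := by
          rw [← hP₂span]
          exact Submodule.subset_span ⟨j, rfl⟩
        rw [evalMap_vecMul, Matrix.vecMul_vecMul]
        exact hmem2 i₀
    · intro p hp
      rw [mem_intModule_iff] at hp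
      have h1 : p ∈ intModule (fun i : Fin k => α (Fin.castAdd l i))
          (fun i : Fin k => E (Fin.castAdd l i)) :=
        (mem_intModule_iff _ _ _).mpr fun i => hp (Fin.castAdd l i)
      rw [← hP₁span, mem_span_rows] at h1
      obtain ⟨q, hq⟩ := h1
      have h2 : q ∈ intModule (fun i : Fin l => α (Fin.natAdd k i))
          (fun i : Fin l =>
            P₁.map (Polynomial.eval (α (Fin.natAdd k i))) * E (Fin.natAdd k i)) := by
        rw [mem_intModule_iff]
        intro i
        rw [← Matrix.vecMul_vecMul, ← evalMap_vecMul, hq]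
        exact hp (Fin.natAdd k i)
      rw [← hP₂span, mem_span_rows] at h2
      obtain ⟨r, hr⟩ := h2
      rw [mem_span_rows]
      exact ⟨r, by rw [← Matrix.vecMul_vecMul, hr, hq]⟩


end
end

section
/- Let K be a field, let F be in K[x]^{m×n}, and let σ and k be integers with 1 ≤ k < σ. Let P_1 in K[x]^{m×m} be nonsingular with rows forming a K[x]-basis of A_{x^k}(F), so that P_1·F ≡ x^k·G (mod x^σ) for some G in K[x]^{m×n}, and let P_2 in K[x]^{m×m} be nonsingular with rows forming a K[x]-basis of A_{x^{σ−k}}(G). Then the rows of P_2·P_1 form a K[x]-basis of A_{x^σ}(F). -/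
open Polynomial Matrix

noncomputable section

lemma sum_smul_rows {R : Type*} [CommRing R] {m n : ℕ} (M : Matrix (Fin m) (Fin n) R)
    (c : Fin m → R) : ∑ i, c i • M i = c ᵥ* M := by
  funext j
  simp [Matrix.vecMul, dotProduct, Finset.sum_apply]

lemma mem_span_rows_iff {R : Type*} [CommRing R] {m n : ℕ} (M : Matrix (Fin m) (Fin n) R)
    (p : Fin n → R) :
    p ∈ Submodule.span R (Set.range (fun i => M i)) ↔ ∃ c, c ᵥ* M = p := by
  rw [Submodule.mem_span_range_iff_exists_fun]
  simp_rw [sum_smul_rows]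

lemma key_dvd {K : Type*} [Field K] {m n : ℕ} (F : Matrix (Fin m) (Fin n) K[X])
    (σ k : ℕ) (P₁ : Matrix (Fin m) (Fin m) K[X])
    (G : Matrix (Fin m) (Fin n) K[X])
    (hG : ∀ i j, (X : K[X]) ^ σ ∣ ((P₁ * F) i j - X ^ k * G i j))
    (q : Fin m → K[X]) (j : Fin n) :
    (X : K[X]) ^ σ ∣ (q ᵥ* (P₁ * F)) j - X ^ k * (q ᵥ* G) j := by
  have : (q ᵥ* (P₁ * F)) j - X ^ k * (q ᵥ* G) j
      = ∑ i, q i * ((P₁ * F) i j - X ^ k * G i j) := by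
    simp [Matrix.vecMul, dotProduct, Finset.mul_sum, ← Finset.sum_sub_distrib, mul_sub]
    exact Finset.sum_congr rfl fun i _ => by ring
  rw [this]
  exact Finset.dvd_sum fun i _ => Dvd.dvd.mul_left (hG i j) (q i)

/-- let `1 ≤ k < σ`, let the rows of the nonsingular `P₁` form a basis of
`A_{x^k}(F)`, let `G` be such that `P₁·F ≡ x^k·G (mod x^σ)`, and let the rows of the
nonsingular `P₂` form a basis of `A_{x^{σ-k}}(G)`. Then the rows of `P₂·P₁` form a
basis of `A_{x^σ}(F)`. -/
theorem stmt8 {K : Type*} [Field K] {m n : ℕ} (F : Matrix (Fin m) (Fin n) K[X])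
    (σ k : ℕ) (hk : 1 ≤ k) (hkσ : k < σ)
    (P₁ P₂ : Matrix (Fin m) (Fin m) K[X]) (hP₁ : P₁.det ≠ 0) (hP₂ : P₂.det ≠ 0)
    (hP₁basis : IsBasisOf (fun i => P₁ i) (approxModule (X ^ k) F))
    (G : Matrix (Fin m) (Fin n) K[X])
    (hG : ∀ i j, (X : K[X]) ^ σ ∣ ((P₁ * F) i j - X ^ k * G i j))
    (hP₂basis : IsBasisOf (fun i => P₂ i) (approxModule (X ^ (σ - k)) G)) :
    IsBasisOf (fun i => (P₂ * P₁) i) (approxModule (X ^ σ) F) := by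

  obtain ⟨h1li, h1sp⟩ := hP₁basis
  obtain ⟨h2li, h2sp⟩ := hP₂basis
  have hXk : (X : K[X]) ^ k ≠ 0 := pow_ne_zero _ X_ne_zero
  have hpow : (X : K[X]) ^ σ = X ^ k * X ^ (σ - k) := by
    rw [← pow_add, Nat.add_sub_cancel' hkσ.le]
  constructor
  · rw [Fintype.linearIndependent_iff]
    intro g hg i
    have hvm : g ᵥ* (P₂ * P₁) = 0 := by rw [← sum_smul_rows]; exact hg
    have hdet : (P₂ * P₁).det ≠ 0 := by
      rw [Matrix.det_mul]; exact mul_ne_zero hP₂ hP₁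
    exact congrFun (Matrix.eq_zero_of_vecMul_eq_zero hdet hvm) i
  · apply le_antisymm
    · intro p hp
      obtain ⟨c, rfl⟩ := (mem_span_rows_iff _ _).mp hp
      intro j
      have hq : (c ᵥ* P₂) ∈ approxModule (X ^ (σ - k)) G := by
        rw [← h2sp]
        exact (mem_span_rows_iff _ _).mpr ⟨c, rfl⟩
      have h1 : (X : K[X]) ^ σ ∣ X ^ k * ((c ᵥ* P₂) ᵥ* G) j := by
        rw [hpow]
        exact mul_dvd_mul_left _ (hq j)
      have h2 := key_dvd F σ k P₁ G hG (c ᵥ* P₂) j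
      have : (c ᵥ* (P₂ * P₁)) ᵥ* F = (c ᵥ* P₂) ᵥ* (P₁ * F) := by
        rw [← Matrix.vecMul_vecMul, ← Matrix.vecMul_vecMul, Matrix.vecMul_vecMul]
      rw [this]
      have := dvd_add h2 h1
      rwa [sub_add_cancel] at this
    · intro p hp
      have hpk : p ∈ approxModule (X ^ k) F := by
        intro j
        exact dvd_trans (pow_dvd_pow _ hkσ.le) (hp j)
      rw [← h1sp] at hpk
      obtain ⟨q, rfl⟩ := (mem_span_rows_iff _ _).mp hpk
      have hqG : q ∈ approxModule (X ^ (σ - k)) G := by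
        intro j
        have hpF : (X : K[X]) ^ σ ∣ (q ᵥ* (P₁ * F)) j := by
          rw [← Matrix.vecMul_vecMul]
          exact hp j
        have h2 := key_dvd F σ k P₁ G hG q j
        have h3 : (X : K[X]) ^ σ ∣ X ^ k * (q ᵥ* G) j := by
          have := dvd_sub hpF h2
          rwa [sub_sub_cancel] at this
        rw [hpow] at h3
        exact (mul_dvd_mul_iff_left hXk).mp h3
      rw [← h2sp] at hqG
      obtain ⟨c, rfl⟩ := (mem_span_rows_iff _ _).mp hqG
      refine (mem_span_rows_iff _ _).mpr ⟨c, ?_⟩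
      rw [← Matrix.vecMul_vecMul]


end
end

section
/- Let K be a field and s ∈ ℤ^m. Let P_1 in K[x]^{m×m} be nonsingular and in s-ordered weak Popov form, let t = (t_1,…,t_m) ∈ ℤ^m where t_i is the s-degree of the i-th row of P_1, and let P_2 in K[x]^{m×m} be nonsingular and in t-ordered weak Popov form. Then P_2·P_1 is in s-ordered weak Popov form, and for each i the s-degree of the i-th row of P_2·P_1 equals the t-degree of the i-th row of P_2. -/
open Polynomial Matrix

noncomputable section

/-- A square polynomial matrix is in `s`-ordered weak Popov form if, for each `i`, the
`s`-pivot of its `i`-th row (the rightmost entry `p_j` with `deg p_j + s_j` equal to the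
`s`-degree of the row) is its `i`-th entry: entry `i` attains the `s`-degree of the row,
and every entry to the right of it has `deg + shift` smaller than the `s`-degree. -/
def IsOWP {K : Type*} [Field K] {m : ℕ} (s : Fin m → ℤ)
    (P : Matrix (Fin m) (Fin m) K[X]) : Prop :=
  ∀ i : Fin m,
    WithBot.map (fun d : ℕ => (d : ℤ) + s i) (P i i).degree = rdeg s (P i) ∧
    ∀ j : Fin m, i < j →
      WithBot.map (fun d : ℕ => (d : ℤ) + s j) (P i j).degree < rdeg s (P i)


section Helpers

variable {K : Type*} [Field K]

/-- degree as an element of `WithBot ℤ`. -/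
def degZ (p : K[X]) : WithBot ℤ := p.degree.map (fun n : ℕ => (n : ℤ))

lemma degZ_map (p : K[X]) (c : ℤ) :
    WithBot.map (fun d : ℕ => (d : ℤ) + c) p.degree = degZ p + (c : WithBot ℤ) := by
  cases h : p.degree with
  | bot => simp [degZ, h]
  | coe n => simp [degZ, h, ← WithBot.coe_add]

lemma degZ_eq_bot {p : K[X]} : degZ p = ⊥ ↔ p = 0 := by
  simp [degZ, Polynomial.degree_eq_bot]

lemma degZ_mul (p q : K[X]) : degZ (p * q) = degZ p + degZ q := by
  unfold degZ
  rw [Polynomial.degree_mul]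
  cases hp : p.degree with
  | bot => simp
  | coe n =>
    cases hq : q.degree with
    | bot => simp
    | coe d => simp [← WithBot.coe_add]

lemma degZ_lt_degZ {p q : K[X]} (h : degZ p < degZ q) : p.degree < q.degree := by
  cases hp : p.degree with
  | bot =>
    cases hq : q.degree with
    | bot => simp [degZ, hp, hq] at h
    | coe d => simp [hp, hq]
  | coe n =>
    cases hq : q.degree with
    | bot => simp [degZ, hp, hq] at h
    | coe d =>
      simp only [degZ, hp, hq, WithBot.map_coe, WithBot.coe_lt_coe] at h
      exact_mod_cast h

lemma addc_lt_addc {a b : WithBot ℤ} {c : ℤ}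
    (h : a + (c : WithBot ℤ) < b + (c : WithBot ℤ)) : a < b := by
  cases a with
  | bot =>
    cases b with
    | bot => simp at h
    | coe d => simp
  | coe n =>
    cases b with
    | bot => simp [← WithBot.coe_add] at h
    | coe d =>
      simp only [← WithBot.coe_add, WithBot.coe_lt_coe] at h ⊢
      omega

lemma addc_eq_bot {a : WithBot ℤ} {c : ℤ} (h : a + (c : WithBot ℤ) = ⊥) : a = ⊥ := by
  cases a with
  | bot => rfl
  | coe n => simp [← WithBot.coe_add] at h

lemma degZ_sum_le {ι : Type*} (sf : Finset ι) (f : ι → K[X]) (c : ℤ) (X : WithBot ℤ)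
    (h : ∀ k ∈ sf, degZ (f k) + (c : WithBot ℤ) ≤ X) :
    degZ (∑ k ∈ sf, f k) + (c : WithBot ℤ) ≤ X := by
  cases h0 : (∑ k ∈ sf, f k).degree with
  | bot => simp [degZ, h0]
  | coe n =>
    have hs := Polynomial.degree_sum_le sf f
    rw [h0] at hs
    obtain ⟨k, hk, hle⟩ := (Finset.le_sup_iff (WithBot.bot_lt_coe n)).1 hs
    refine le_trans ?_ (h k hk)
    cases hk2 : (f k).degree with
    | bot => rw [hk2, le_bot_iff] at hle; exact absurd hle (WithBot.coe_ne_bot)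
    | coe d =>
      rw [hk2] at hle
      have hnd : n ≤ d := WithBot.coe_le_coe.1 hle
      simp only [degZ, h0, hk2, WithBot.map_coe, ← WithBot.coe_add, WithBot.coe_le_coe]
      omega

lemma degZ_sum_lt {ι : Type*} (sf : Finset ι) (f : ι → K[X]) (c : ℤ) (X : WithBot ℤ)
    (hX : ⊥ < X)
    (h : ∀ k ∈ sf, degZ (f k) + (c : WithBot ℤ) < X) :
    degZ (∑ k ∈ sf, f k) + (c : WithBot ℤ) < X := by
  cases h0 : (∑ k ∈ sf, f k).degree with
  | bot => simpa [degZ, h0] using hX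
  | coe n =>
    have hs := Polynomial.degree_sum_le sf f
    rw [h0] at hs
    obtain ⟨k, hk, hle⟩ := (Finset.le_sup_iff (WithBot.bot_lt_coe n)).1 hs
    refine lt_of_le_of_lt ?_ (h k hk)
    cases hk2 : (f k).degree with
    | bot => rw [hk2, le_bot_iff] at hle; exact absurd hle (WithBot.coe_ne_bot)
    | coe d =>
      rw [hk2] at hle
      have hnd : n ≤ d := WithBot.coe_le_coe.1 hle
      simp only [degZ, h0, hk2, WithBot.map_coe, ← WithBot.coe_add, WithBot.coe_le_coe]
      omega

lemma rdeg_eq {m : ℕ} (s : Fin m → ℤ) (p : Fin m → K[X]) :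
    rdeg s p = Finset.univ.sup (fun i => degZ (p i) + (s i : WithBot ℤ)) := by
  unfold rdeg
  congr 1
  funext i
  exact degZ_map _ _

end Helpers

/-- if `P₁` is nonsingular in `s`-ordered weak Popov form, `t_i` is the
`s`-degree of the `i`-th row of `P₁`, and `P₂` is nonsingular in `t`-ordered weak Popov
form, then `P₂·P₁` is in `s`-ordered weak Popov form, and the `s`-degree of its `i`-th
row is the `t`-degree of the `i`-th row of `P₂`. -/
theorem stmt9 {K : Type*} [Field K] {m : ℕ} (s t : Fin m → ℤ)
    (P₁ P₂ : Matrix (Fin m) (Fin m) K[X])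
    (hP₁ : P₁.det ≠ 0) (hP₂ : P₂.det ≠ 0)
    (hP₁owp : IsOWP s P₁) (hP₂owp : IsOWP t P₂)
    (ht : ∀ i, ((t i : ℤ) : WithBot ℤ) = rdeg s (P₁ i)) :
    IsOWP s (P₂ * P₁) ∧ ∀ i, rdeg s ((P₂ * P₁) i) = rdeg t (P₂ i) := by
  -- basic facts about P₁
  have hP1le : ∀ k j : Fin m, degZ (P₁ k j) + (s j : WithBot ℤ) ≤ ((t k : ℤ) : WithBot ℤ) := by
    intro k j
    rw [ht k, rdeg_eq]
    exact Finset.le_sup (f := fun j => degZ (P₁ k j) + ((s j : ℤ) : WithBot ℤ)) (Finset.mem_univ j)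
  have hP1lt : ∀ k j : Fin m, k < j →
      degZ (P₁ k j) + (s j : WithBot ℤ) < ((t k : ℤ) : WithBot ℤ) := by
    intro k j hkj
    rw [ht k, ← degZ_map]
    exact (hP₁owp k).2 j hkj
  have hP1eq : ∀ k : Fin m, degZ (P₁ k k) + (s k : WithBot ℤ) = ((t k : ℤ) : WithBot ℤ) := by
    intro k
    rw [ht k, ← degZ_map]
    exact (hP₁owp k).1
  have key : ∀ i : Fin m,
      (WithBot.map (fun d : ℕ => (d : ℤ) + s i) ((P₂ * P₁) i i).degree = rdeg s ((P₂ * P₁) i) ∧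
        ∀ j : Fin m, i < j →
          WithBot.map (fun d : ℕ => (d : ℤ) + s j) ((P₂ * P₁) i j).degree < rdeg s ((P₂ * P₁) i)) ∧
      rdeg s ((P₂ * P₁) i) = rdeg t (P₂ i) := by
    intro i
    set X : WithBot ℤ := rdeg t (P₂ i) with hXdef
    have hP2le : ∀ k : Fin m, degZ (P₂ i k) + ((t k : ℤ) : WithBot ℤ) ≤ X := by
      intro k
      rw [hXdef, rdeg_eq]
      exact Finset.le_sup (f := fun k => degZ (P₂ i k) + ((t k : ℤ) : WithBot ℤ)) (Finset.mem_univ k)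
    have hP2lt : ∀ k : Fin m, i < k → degZ (P₂ i k) + ((t k : ℤ) : WithBot ℤ) < X := by
      intro k hk
      rw [← degZ_map]
      exact (hP₂owp i).2 k hk
    have hP2eq : degZ (P₂ i i) + ((t i : ℤ) : WithBot ℤ) = X := by
      rw [← degZ_map]
      exact (hP₂owp i).1
    by_cases hX : X = ⊥
    · -- row i of P₂ is zero
      have hz : ∀ k, P₂ i k = 0 := by
        intro k
        have := hP2le k
        rw [hX, le_bot_iff] at this
        exact degZ_eq_bot.1 (addc_eq_bot this)
      have hrow : ∀ j, (P₂ * P₁) i j = 0 := by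
        intro j
        rw [Matrix.mul_apply]
        exact Finset.sum_eq_zero fun k _ => by rw [hz k, zero_mul]
      have hr : rdeg s ((P₂ * P₁) i) = X := by
        rw [hX, rdeg_eq]
        simp [hrow, degZ_eq_bot.2 rfl]
      refine ⟨⟨?_, ?_⟩, hr⟩
      · rw [hr, hX, hrow]; simp
      · intro j hj
        exact absurd ((hP₂owp i).2 j hj) (by rw [← hXdef, hX]; exact not_lt_bot)
    · have hXbot : ⊥ < X := bot_lt_iff_ne_bot.2 hX
      -- term bounds
      have term_le : ∀ k j : Fin m,
          degZ (P₂ i k * P₁ k j) + (s j : WithBot ℤ) ≤ X := by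
        intro k j
        rw [degZ_mul, add_assoc]
        calc degZ (P₂ i k) + (degZ (P₁ k j) + (s j : WithBot ℤ))
            ≤ degZ (P₂ i k) + ((t k : ℤ) : WithBot ℤ) := add_le_add le_rfl (hP1le k j)
          _ ≤ X := hP2le k
      have term_lt : ∀ k j : Fin m, (i < j ∨ (j = i ∧ k ≠ i)) →
          degZ (P₂ i k * P₁ k j) + (s j : WithBot ℤ) < X := by
        intro k j hkj
        rw [degZ_mul, add_assoc]
        by_cases hc : degZ (P₂ i k) = ⊥
        · rw [hc, WithBot.bot_add]; exact hXbot
        · by_cases hik : i < k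
          · exact lt_of_le_of_lt (add_le_add le_rfl (hP1le k j)) (hP2lt k hik)
          · have hkj' : k < j := by
              rcases hkj with h | ⟨rfl, hne⟩
              · exact lt_of_le_of_lt (not_lt.1 hik) h
              · exact lt_of_le_of_ne (not_lt.1 hik) hne
            exact lt_of_lt_of_le (WithBot.add_lt_add_left hc (hP1lt k j hkj')) (hP2le k)
      have entry_le : ∀ j : Fin m, degZ ((P₂ * P₁) i j) + (s j : WithBot ℤ) ≤ X := by
        intro j
        rw [Matrix.mul_apply]
        exact degZ_sum_le _ _ _ _ fun k _ => term_le k j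
      have entry_lt : ∀ j : Fin m, i < j →
          degZ ((P₂ * P₁) i j) + (s j : WithBot ℤ) < X := by
        intro j hj
        rw [Matrix.mul_apply]
        exact degZ_sum_lt _ _ _ _ hXbot fun k _ => term_lt k j (Or.inl hj)
      have entry_eq : degZ ((P₂ * P₁) i i) + (s i : WithBot ℤ) = X := by
        have hmain : degZ (P₂ i i * P₁ i i) + (s i : WithBot ℤ) = X := by
          rw [degZ_mul, add_assoc, hP1eq i, hP2eq]
        have hrest : degZ (∑ k ∈ Finset.univ.erase i, P₂ i k * P₁ k i)
            + (s i : WithBot ℤ) < X := by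
          refine degZ_sum_lt _ _ _ _ hXbot fun k hk => ?_
          exact term_lt k i (Or.inr ⟨rfl, Finset.ne_of_mem_erase hk⟩)
        have hsplit : (P₂ * P₁) i i
            = P₂ i i * P₁ i i + ∑ k ∈ Finset.univ.erase i, P₂ i k * P₁ k i := by
          rw [Matrix.mul_apply]
          exact (Finset.add_sum_erase _ _ (Finset.mem_univ i)).symm
        have hdlt : (∑ k ∈ Finset.univ.erase i, P₂ i k * P₁ k i).degree
            < (P₂ i i * P₁ i i).degree := by
          apply degZ_lt_degZ
          exact addc_lt_addc (by rw [hmain]; exact hrest)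
        rw [hsplit]
        have : (P₂ i i * P₁ i i + ∑ k ∈ Finset.univ.erase i, P₂ i k * P₁ k i).degree
            = (P₂ i i * P₁ i i).degree := Polynomial.degree_add_eq_left_of_degree_lt hdlt
        rw [degZ, this, ← degZ, hmain]
      have hrow : rdeg s ((P₂ * P₁) i) = X := by
        rw [rdeg_eq]
        apply le_antisymm
        · exact Finset.sup_le fun j _ => entry_le j
        · rw [← entry_eq]
          exact Finset.le_sup (f := fun j => degZ ((P₂ * P₁) i j) + ((s j : ℤ) : WithBot ℤ)) (Finset.mem_univ i)
      refine ⟨⟨?_, ?_⟩, hrow⟩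
      · rw [degZ_map, hrow, entry_eq]
      · intro j hj
        rw [degZ_map, hrow]
        exact entry_lt j hj
  exact ⟨fun i => (key i).1, fun i => (key i).2⟩

end
end

section
/- Let K be a field, let P in K[z] be monic of degree n ≥ 1, and let A be in K[z]. Then the characteristic polynomial (in the variable x) of the K-linear endomorphism of K[z]/(P) given by multiplication by the residue class of A equals, up to multiplication by a nonzero constant of K, the resultant with respect to z of the polynomials x − A(z) and P(z), viewed as polynomials in z with coefficients in K[x]. -/
open Polynomial Matrix

noncomputable section

/-- The Sylvester matrix of two polynomials `f, g ∈ R[z]` with respect to the formal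
degrees `m` (for `f`) and `n` (for `g`): an `(n+m)×(n+m)` matrix whose first `n`
columns carry the shifted coefficients of `f` and whose last `m` columns carry the
shifted coefficients of `g`. Its determinant is the resultant of `f` and `g`. -/
def sylvester {R : Type*} [CommRing R] (f g : Polynomial R) (m n : ℕ) :
    Matrix (Fin (n + m)) (Fin (n + m)) R :=
  Matrix.of fun i j =>
    Fin.addCases (motive := fun _ => R)
      (fun j₁ : Fin n => if (j₁ : ℕ) ≤ (i : ℕ) then f.coeff ((i : ℕ) - (j₁ : ℕ)) else 0)
      (fun j₂ : Fin m => if (j₂ : ℕ) ≤ (i : ℕ) then g.coeff ((i : ℕ) - (j₂ : ℕ)) else 0) j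

namespace Stmt13Aux

variable {R : Type*} [CommRing R]

lemma poly_eq_sum_fin {p : R[X]} {m : ℕ} (h : p.degree < (m : ℕ)) :
    p = ∑ k : Fin m, Polynomial.C (p.coeff k) * X ^ (k : ℕ) := by
  rw [Fin.sum_univ_eq_sum_range (fun k => Polynomial.C (p.coeff k) * X ^ k) m]
  by_cases hp : p = 0
  · simp [hp]
  · conv_lhs => rw [p.as_sum_range' m ((natDegree_lt_iff_degree_lt hp).mpr h)]
    simp [C_mul_X_pow_eq_monomial]

lemma det_sylvester_eq [Nontrivial R] (f g : R[X]) (m n : ℕ) (hg : g.Monic)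
    (hgn : g.natDegree = n) (hn : 1 ≤ n) (hf : f.natDegree ≤ m) :
    (_root_.sylvester f g m n).det
      = (Matrix.of fun i j : Fin n => ((f * X ^ (j : ℕ)) %ₘ g).coeff i).det := by
  classical
  have hgd : g.degree = (n : ℕ) := by rw [degree_eq_natDegree hg.ne_zero, hgn]
  have hqdeg : ∀ j : Fin n, ((f * X ^ (j : ℕ)) /ₘ g).degree < (m : ℕ) := by
    intro j
    have hdfx : (f * X ^ (j : ℕ)).natDegree ≤ m + (j : ℕ) := by
      refine le_trans (natDegree_mul_le) ?_
      simp only [natDegree_X_pow]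
      omega
    rcases Nat.eq_zero_or_pos m with hm | hm
    · have h0 : (f * X ^ (j : ℕ)) /ₘ g = 0 := by
        rw [divByMonic_eq_zero_iff hg, hgd]
        refine lt_of_le_of_lt (degree_le_natDegree) ?_
        exact_mod_cast (by omega : (f * X ^ (j : ℕ)).natDegree < n)
      rw [h0, degree_zero]
      exact WithBot.bot_lt_coe _
    · have hlt : ((f * X ^ (j : ℕ)) /ₘ g).natDegree < m := by
        have hnd := natDegree_divByMonic (f * X ^ (j : ℕ)) hg
        rw [hgn] at hnd
        have hj : (j : ℕ) < n := j.isLt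
        omega
      refine lt_of_le_of_lt (degree_le_natDegree) ?_
      exact_mod_cast hlt
  -- key coefficient identity
  have hkey : ∀ (j : Fin n) (N : ℕ),
      ((f * X ^ (j : ℕ)) %ₘ g).coeff N
        = (f * X ^ (j : ℕ)).coeff N
            - ∑ k : Fin m, ((f * X ^ (j : ℕ)) /ₘ g).coeff k * (g * X ^ (k : ℕ)).coeff N := by
    intro j N
    have hr : (f * X ^ (j : ℕ)) %ₘ g = f * X ^ (j : ℕ) - g * ((f * X ^ (j : ℕ)) /ₘ g) :=
      eq_sub_of_add_eq (modByMonic_add_div _ g)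
    have hgq : g * ((f * X ^ (j : ℕ)) /ₘ g)
        = ∑ k : Fin m, Polynomial.C (((f * X ^ (j : ℕ)) /ₘ g).coeff k) * (g * X ^ (k : ℕ)) := by
      conv_lhs => rw [poly_eq_sum_fin (hqdeg j)]
      rw [Finset.mul_sum]
      refine Finset.sum_congr rfl fun k _ => by ring
    rw [hr, coeff_sub, hgq, finset_sum_coeff]
    simp [coeff_C_mul]
  -- reindex the Sylvester matrix over a sum type
  set e : Fin n ⊕ Fin m ≃ Fin (n + m) := finSumFinEquiv with he
  set S : Matrix (Fin n ⊕ Fin m) (Fin n ⊕ Fin m) R := (_root_.sylvester f g m n).submatrix e e with hS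
  have hdet0 : (_root_.sylvester f g m n).det = S.det := (Matrix.det_submatrix_equiv_self e _).symm
  have hSapp : ∀ (i : Fin n ⊕ Fin m) (c : Fin n ⊕ Fin m),
      S i c = (Sum.elim (fun j : Fin n => f * X ^ (j : ℕ))
        (fun k : Fin m => g * X ^ (k : ℕ)) c).coeff ((e i : ℕ)) := by
    intro i c
    rcases c with j | k
    · show _root_.sylvester f g m n (e i) (e (Sum.inl j)) = _
      rw [he]
      simp only [finSumFinEquiv_apply_left, _root_.sylvester, Matrix.of_apply, Fin.addCases_left,
        Sum.elim_inl, coeff_mul_X_pow']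
    · show _root_.sylvester f g m n (e i) (e (Sum.inr k)) = _
      rw [he]
      simp only [finSumFinEquiv_apply_right, _root_.sylvester, Matrix.of_apply, Fin.addCases_right,
        Sum.elim_inr, coeff_mul_X_pow']
  set Q : Matrix (Fin m) (Fin n) R := Matrix.of fun k j => -(((f * X ^ (j : ℕ)) /ₘ g).coeff k) with hQ
  set E : Matrix (Fin n ⊕ Fin m) (Fin n ⊕ Fin m) R := Matrix.fromBlocks 1 0 Q 1 with hE
  set T : Matrix (Fin n) (Fin n) R :=
    Matrix.of (fun i j : Fin n => ((f * X ^ (j : ℕ)) %ₘ g).coeff i) with hT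
  set B : Matrix (Fin n) (Fin m) R :=
    Matrix.of (fun i k => (g * X ^ (k : ℕ)).coeff i) with hB
  set D : Matrix (Fin m) (Fin m) R :=
    Matrix.of (fun i k => (g * X ^ (k : ℕ)).coeff (n + i)) with hD
  have hmul : S * E = Matrix.fromBlocks T B 0 D := by
    ext r c
    rcases c with j | k
    · have hcol : (S * E) r (Sum.inl j) = ((f * X ^ (j : ℕ)) %ₘ g).coeff ((e r : ℕ)) := by
        rw [Matrix.mul_apply, Fintype.sum_sum_type]
        have h1 : ∑ j' : Fin n, S r (Sum.inl j') * E (Sum.inl j') (Sum.inl j)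
            = S r (Sum.inl j) := by
          rw [hE]
          simp [Matrix.one_apply, mul_ite]
        have h2 : ∑ k : Fin m, S r (Sum.inr k) * E (Sum.inr k) (Sum.inl j)
            = ∑ k : Fin m,
                -(((f * X ^ (j : ℕ)) /ₘ g).coeff k * (g * X ^ (k : ℕ)).coeff ((e r : ℕ))) := by
          refine Finset.sum_congr rfl fun k _ => ?_
          rw [hE]
          simp only [Matrix.fromBlocks_apply₂₁, hQ, Matrix.of_apply, hSapp, Sum.elim_inr]
          ring
        rw [h1, h2, Finset.sum_neg_distrib, hkey, hSapp]
        simp [sub_eq_add_neg]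
      rcases r with i | i
      · rw [hcol]
        simp only [Matrix.fromBlocks_apply₁₁, hT, Matrix.of_apply, he,
          finSumFinEquiv_apply_left, Fin.coe_castAdd]
      · rw [hcol]
        simp only [Matrix.fromBlocks_apply₂₁, Matrix.zero_apply, he,
          finSumFinEquiv_apply_right, Fin.coe_natAdd]
        refine coeff_eq_zero_of_degree_lt (lt_of_lt_of_le (degree_modByMonic_lt _ hg) ?_)
        rw [hgd]
        exact_mod_cast Nat.le_add_right n i
    · have hcol : (S * E) r (Sum.inr k) = (g * X ^ (k : ℕ)).coeff ((e r : ℕ)) := by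
        rw [Matrix.mul_apply, Fintype.sum_sum_type]
        have h1 : ∑ j' : Fin n, S r (Sum.inl j') * E (Sum.inl j') (Sum.inr k) = 0 := by
          rw [hE]
          simp
        have h2 : ∑ k' : Fin m, S r (Sum.inr k') * E (Sum.inr k') (Sum.inr k)
            = S r (Sum.inr k) := by
          rw [hE]
          simp [Matrix.one_apply, mul_ite]
        rw [h1, h2, hSapp, zero_add, Sum.elim_inr]
      rcases r with i | i
      · rw [hcol]
        simp only [Matrix.fromBlocks_apply₁₂, hB, Matrix.of_apply, he,
          finSumFinEquiv_apply_left, Fin.coe_castAdd]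
      · rw [hcol]
        simp only [Matrix.fromBlocks_apply₂₂, hD, Matrix.of_apply, he,
          finSumFinEquiv_apply_right, Fin.coe_natAdd]
  have hdetE : E.det = 1 := by
    rw [hE, Matrix.det_fromBlocks_zero₁₂]
    simp
  have hdetD : D.det = 1 := by
    have htri : D.BlockTriangular id := by
      intro i k hki
      have hki' : (k : ℕ) < (i : ℕ) := hki
      have hDe : D i k = (g * X ^ (k : ℕ)).coeff (n + (i : ℕ)) := rfl
      rw [hDe, coeff_mul_X_pow', if_pos (by omega : (k : ℕ) ≤ n + (i : ℕ))]
      exact coeff_eq_zero_of_natDegree_lt (by omega)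
    rw [Matrix.det_of_upperTriangular htri]
    refine Finset.prod_eq_one fun i _ => ?_
    have hDe : D i i = (g * X ^ (i : ℕ)).coeff (n + (i : ℕ)) := rfl
    rw [hDe, coeff_mul_X_pow', if_pos (Nat.le_add_left _ _), Nat.add_sub_cancel, ← hgn]
    exact hg.coeff_natDegree
  have hSeq : S.det = T.det * D.det := by
    have h := congrArg Matrix.det hmul
    rw [Matrix.det_mul, hdetE, mul_one] at h
    rw [h, Matrix.det_fromBlocks_zero₂₁]
  rw [hdet0, hSeq, hdetD, mul_one]

end Stmt13Aux

/-- for `P ∈ K[z]` monic of degree `n ≥ 1` and `A ∈ K[z]`, the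
characteristic polynomial (in `x`) of the `K`-linear endomorphism of `K[z]/(P)` given
by multiplication by the class of `A` equals, up to a nonzero constant of `K`, the
resultant with respect to `z` of `x − A(z)` and `P(z)`, viewed via `(K[x])[z]`. -/
theorem stmt13 {K : Type*} [Field K] (P : Polynomial K) (hP : P.Monic)
    (hn : 1 ≤ P.natDegree) (A : Polynomial K) :
    ∃ c : K, c ≠ 0 ∧
      Matrix.charpoly
          ((LinearMap.toMatrix (AdjoinRoot.powerBasis hP.ne_zero).basis
              (AdjoinRoot.powerBasis hP.ne_zero).basis)
            (LinearMap.mulLeft K (AdjoinRoot.mk P A)))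
        = Polynomial.C c *
            (_root_.sylvester (Polynomial.C Polynomial.X - A.map Polynomial.C)
                (P.map Polynomial.C) A.natDegree P.natDegree).det := by
  classical
  refine ⟨1, one_ne_zero, ?_⟩
  rw [Polynomial.C_1, one_mul]
  haveI : Module.Free K (AdjoinRoot P) := Module.Free.of_basis (AdjoinRoot.powerBasisAux' hP)
  haveI : Module.Finite K (AdjoinRoot P) := Module.Finite.of_basis (AdjoinRoot.powerBasisAux' hP)
  rw [LinearMap.charpoly_toMatrix]
  rw [← LinearMap.charpoly_toMatrix _ (AdjoinRoot.powerBasisAux' hP)]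
  -- compute the matrix of multiplication by `mk P A` in the power basis
  have hM : LinearMap.toMatrix (AdjoinRoot.powerBasisAux' hP) (AdjoinRoot.powerBasisAux' hP)
      (LinearMap.mulLeft K (AdjoinRoot.mk P A))
      = Matrix.of (fun i j : Fin P.natDegree => ((A * X ^ (j : ℕ)) %ₘ P).coeff i) := by
    ext i j
    rw [LinearMap.toMatrix_apply]
    have hb : (AdjoinRoot.powerBasisAux' hP) j = AdjoinRoot.mk P (X ^ (j : ℕ)) := by
      have h := (AdjoinRoot.powerBasis' hP).basis_eq_pow j
      exact h.trans (by rw [map_pow, AdjoinRoot.mk_X]; rfl)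
    rw [hb, LinearMap.mulLeft_apply, ← RingHom.map_mul,
      AdjoinRoot.powerBasisAux'_repr_apply_to_fun, AdjoinRoot.modByMonicHom_mk]
    rfl
  rw [hM]
  -- rewrite the Sylvester determinant
  have hPm : (P.map (Polynomial.C : K →+* Polynomial K)).Monic := hP.map _
  have hPn : (P.map (Polynomial.C : K →+* Polynomial K)).natDegree = P.natDegree :=
    hP.natDegree_map _
  have hfd : (Polynomial.C Polynomial.X - A.map Polynomial.C).natDegree ≤ A.natDegree := by
    refine le_trans (natDegree_sub_le _ _) ?_
    simp [natDegree_map_le]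
  rw [Stmt13Aux.det_sylvester_eq _ _ A.natDegree P.natDegree hPm hPn hn hfd]
  -- identify the reduced matrix with the characteristic matrix
  rw [Matrix.charpoly]
  congr 1
  refine Matrix.ext fun i j => ?_
  have hsub : ((Polynomial.C Polynomial.X - A.map Polynomial.C) * X ^ (j : ℕ))
      %ₘ (P.map Polynomial.C)
      = Polynomial.C Polynomial.X * X ^ (j : ℕ)
          - ((A * X ^ (j : ℕ)) %ₘ P).map Polynomial.C := by
    rw [sub_mul, sub_modByMonic]
    congr 1
    · refine (modByMonic_eq_self_iff hPm).mpr ?_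
      rw [degree_eq_natDegree hPm.ne_zero, hPn]
      have h1 : (Polynomial.C (Polynomial.X : Polynomial K) * X ^ (j : ℕ)).natDegree
          ≤ (j : ℕ) := by
        refine le_trans natDegree_mul_le ?_
        simp
      have h2 : (Polynomial.C (Polynomial.X : Polynomial K) * X ^ (j : ℕ)).degree
          ≤ ((j : ℕ) : WithBot ℕ) :=
        le_trans degree_le_natDegree (by exact_mod_cast h1)
      exact lt_of_le_of_lt h2 (by exact_mod_cast j.isLt)
    · rw [map_modByMonic _ hP, Polynomial.map_mul, Polynomial.map_pow, Polynomial.map_X]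
  rw [Matrix.charmatrix_apply]
  show _ = (((Polynomial.C Polynomial.X - A.map Polynomial.C) * X ^ (j : ℕ))
      %ₘ (P.map Polynomial.C)).coeff i
  rw [hsub, coeff_sub, coeff_C_mul, coeff_X_pow, coeff_map, Matrix.diagonal_apply]
  by_cases hij : i = j
  · subst hij
    simp
  · have : (i : ℕ) ≠ (j : ℕ) := fun h => hij (Fin.ext h)
    simp [hij, this]
end
end
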